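/- Every fixed point y ∈ (0,1] of the corner-point density evolution map G(y) = ((1−p) + p·e^{−α(1−ε₁)})·exp(−α(1−ε₂)·ρ^N(1−y)) satisfies y ≥ ((1−p)·e^{−β(μ+1)})^{1/(1−β)}, a strictly positive constant independent of the truncation level N. -/

import Mathlib

open Real Filter

noncomputable def qp (p x : ℝ) : ℝ :=
  (Real.sqrt ((1 - p) ^ 2 + 4 * p * x) - (1 - p)) / (2 * p)

noncomputable def aCoeff (p : ℝ) (i : ℕ) : ℝ :=
  (∑ k ∈ Finset.range i, (Nat.choose (2 * i - 1) k : ℝ) * p ^ k) /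
    (i * (1 + p) ^ (2 * i - 1))

noncomputable def Gpart (p : ℝ) (N : ℕ) : ℝ := ∑ i ∈ Finset.Icc 1 N, aCoeff p i

noncomputable def Sp (p x : ℝ) : ℝ := - Real.log (qp p (1 - x))

noncomputable def rhoN (p μ : ℝ) (N : ℕ) (x : ℝ) : ℝ :=
  (μ + (∑ i ∈ Finset.Icc 1 N, aCoeff p i * x ^ i) + x ^ N) / (μ + Gpart p N + 1)

noncomputable def lamBarN (p μ : ℝ) (N : ℕ) (x : ℝ) : ℝ :=
  Real.exp (-(μ + Gpart p N + 1) * rhoN p μ N (1 - x))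

noncomputable def deSym (p μ : ℝ) (N : ℕ) (x : ℝ) : ℝ :=
  ((1 - p) + p * lamBarN p μ N x) * lamBarN p μ N x

noncomputable def cornerMap (p μ : ℝ) (N : ℕ) (α ε₁ ε₂ : ℝ) (y : ℝ) : ℝ :=
  ((1 - p) + p * Real.exp (-(α * (1 - ε₁)))) *
    Real.exp (-(α * (1 - ε₂)) * rhoN p μ N (1 - y))

lemma aCoeff_nonneg (p : ℝ) (hp : 0 ≤ p) (i : ℕ) : 0 ≤ aCoeff p i := by
  unfold aCoeff
  apply div_nonneg
  · exact Finset.sum_nonneg fun k _ => mul_nonneg (Nat.cast_nonneg _) (pow_nonneg hp k)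
  · exact mul_nonneg (Nat.cast_nonneg _) (pow_nonneg (by linarith) _)

lemma aCoeff_le (p : ℝ) (hp : 0 ≤ p) (i : ℕ) (hi : 1 ≤ i) : aCoeff p i ≤ 1 / i := by
  have hP : (0:ℝ) < (1 + p) ^ (2 * i - 1) := pow_pos (by linarith) _
  have hi' : (0:ℝ) < (i : ℝ) := by exact_mod_cast hi
  have hexp : (1 + p) ^ (2 * i - 1)
      = ∑ k ∈ Finset.range (2 * i - 1 + 1), (Nat.choose (2 * i - 1) k : ℝ) * p ^ k := by
    rw [add_comm (1:ℝ) p, add_pow]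
    simp [mul_comm, mul_assoc, mul_left_comm]
  have hnum : (∑ k ∈ Finset.range i, (Nat.choose (2 * i - 1) k : ℝ) * p ^ k)
      ≤ (1 + p) ^ (2 * i - 1) := by
    rw [hexp]
    apply Finset.sum_le_sum_of_subset_of_nonneg
    · apply Finset.range_subset_range.2; omega
    · intro k _ _; exact mul_nonneg (Nat.cast_nonneg _) (pow_nonneg hp k)
  have hpos : (0:ℝ) < (i : ℝ) * (1 + p) ^ (2 * i - 1) := mul_pos hi' hP
  have h1 : aCoeff p i ≤ (1 + p) ^ (2 * i - 1) / ((i : ℝ) * (1 + p) ^ (2 * i - 1)) := by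
    unfold aCoeff
    exact (div_le_div_iff_of_pos_right hpos).2 hnum
  calc aCoeff p i ≤ (1 + p) ^ (2 * i - 1) / ((i : ℝ) * (1 + p) ^ (2 * i - 1)) := h1
    _ = 1 / i := by
      rw [mul_comm (i:ℝ) _, ← div_div, div_self hP.ne']

theorem stmt14 (p : ℝ) (hp0 : 0 < p) (hp1 : p < 1) (μ : ℝ) (hμ : 0 < μ)
    (N : ℕ) (hN : 1 ≤ N)
    (ε ε₁ ε₂ : ℝ) (hε : ε ∈ Set.Ico (0 : ℝ) 1) (hε₁ : ε₁ ∈ Set.Ico (0 : ℝ) 1)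
    (hε₂ : ε₂ ∈ Set.Ico (0 : ℝ) 1) (hεε₂ : ε < ε₂)
    (α β : ℝ) (hα : α = (μ + Gpart p N + 1) / (1 - ε)) (hβ : β = (1 - ε₂) / (1 - ε))
    (hβ0 : 0 < β) (hβ1 : β < 1) :
    ∀ y : ℝ, 0 < y → y ≤ 1 → cornerMap p μ N α ε₁ ε₂ y = y →
      ((1 - p) * Real.exp (-(β * (μ + 1)))) ^ (1 / (1 - β)) ≤ y := by
  intro y hy0 hy1 hfix
  have hx0 : 0 ≤ 1 - y := by linarith
  have hx1 : 1 - y < 1 := by linarith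
  have hG : 0 ≤ Gpart p N :=
    Finset.sum_nonneg fun i _ => aCoeff_nonneg p hp0.le i
  have hD : 0 < μ + Gpart p N + 1 := by linarith
  have hεlt : ε < 1 := hε.2
  have hε0 : (0:ℝ) < 1 - ε := by linarith
  set S := ∑ i ∈ Finset.Icc 1 N, aCoeff p i * (1 - y) ^ i with hSdef
  -- S ≤ -log y
  have hS : S ≤ - Real.log y := by
    have h1 : S ≤ ∑ i ∈ Finset.Icc 1 N, (1 - y) ^ i / i := by
      apply Finset.sum_le_sum
      intro i hi
      have hi1 : 1 ≤ i := (Finset.mem_Icc.1 hi).1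
      calc aCoeff p i * (1 - y) ^ i ≤ (1 / i) * (1 - y) ^ i :=
            mul_le_mul_of_nonneg_right (aCoeff_le p hp0.le i hi1) (pow_nonneg hx0 i)
        _ = (1 - y) ^ i / i := by ring
    have h2 : ∑ i ∈ Finset.Icc 1 N, (1 - y) ^ i / i
        = ∑ n ∈ Finset.range N, (1 - y) ^ (n + 1) / (n + 1) := by
      rw [← Finset.Ico_add_one_right_eq_Icc, Finset.sum_Ico_eq_sum_range]
      simp [add_comm]
    have h3 : ∑ n ∈ Finset.range N, (1 - y) ^ (n + 1) / (n + 1)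
        ≤ - Real.log (1 - (1 - y)) := by
      apply sum_le_hasSum (L := SummationFilter.unconditional ℕ) (Finset.range N) (fun n _ => by positivity)
      exact Real.hasSum_pow_div_log_of_abs_lt_one (by rw [abs_of_nonneg hx0]; exact hx1)
    calc S ≤ _ := h1
      _ = _ := h2
      _ ≤ - Real.log (1 - (1 - y)) := h3
      _ = - Real.log y := by norm_num
  -- rewrite the exponent in the fixed point equation
  have hexp : -(α * (1 - ε₂)) * rhoN p μ N (1 - y)
      = -(β * (μ + S + (1 - y) ^ N)) := by
    rw [hα, hβ]
    unfold rhoN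
    rw [← hSdef]
    field_simp
  have hfix' : ((1 - p) + p * Real.exp (-(α * (1 - ε₁)))) *
      Real.exp (-(β * (μ + S + (1 - y) ^ N))) = y := by
    rw [← hexp]; exact hfix
  -- lower bound on y
  have hE : 0 < Real.exp (-(β * (μ + S + (1 - y) ^ N))) := Real.exp_pos _
  have hy_ge : (1 - p) * Real.exp (-(β * (μ + S + (1 - y) ^ N))) ≤ y := by
    have hpe : (0:ℝ) ≤ p * Real.exp (-(α * (1 - ε₁))) :=
      mul_nonneg hp0.le (Real.exp_pos _).le
    calc (1 - p) * Real.exp (-(β * (μ + S + (1 - y) ^ N)))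
        ≤ ((1 - p) + p * Real.exp (-(α * (1 - ε₁)))) *
            Real.exp (-(β * (μ + S + (1 - y) ^ N))) :=
          mul_le_mul_of_nonneg_right (by linarith) hE.le
      _ = y := hfix'
  have hxN : (1 - y) ^ N ≤ 1 := pow_le_one₀ hx0 (by linarith)
  have hmono : -(β * (μ + 1)) + β * Real.log y ≤ -(β * (μ + S + (1 - y) ^ N)) := by
    nlinarith [hβ0, hS, hxN]
  have hkey : (1 - p) * Real.exp (-(β * (μ + 1))) * y ^ β ≤ y := by
    have h4 : Real.exp (-(β * (μ + 1))) * y ^ β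
        ≤ Real.exp (-(β * (μ + S + (1 - y) ^ N))) := by
      rw [Real.rpow_def_of_pos hy0, ← Real.exp_add]
      apply Real.exp_le_exp.2
      rw [mul_comm (Real.log y) β]
      exact hmono
    calc (1 - p) * Real.exp (-(β * (μ + 1))) * y ^ β
        = (1 - p) * (Real.exp (-(β * (μ + 1))) * y ^ β) := by ring
      _ ≤ (1 - p) * Real.exp (-(β * (μ + S + (1 - y) ^ N))) := by
          apply mul_le_mul_of_nonneg_left h4 (by linarith)
      _ ≤ y := hy_ge
  -- finish
  set c := (1 - p) * Real.exp (-(β * (μ + 1))) with hcdef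
  have hc0 : 0 < c := mul_pos (by linarith) (Real.exp_pos _)
  have hb : 0 < 1 - β := by linarith
  have h5 : c ≤ y ^ (1 - β) := by
    rw [Real.rpow_sub hy0, Real.rpow_one]
    rw [le_div_iff₀ (Real.rpow_pos_of_pos hy0 β)]
    exact hkey
  calc c ^ (1 / (1 - β)) ≤ (y ^ (1 - β)) ^ (1 / (1 - β)) :=
        Real.rpow_le_rpow hc0.le h5 (by positivity)
    _ = y := by
        rw [← Real.rpow_mul hy0.le, mul_one_div, div_self hb.ne', Real.rpow_one]
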